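/- Let $M$ be a sparse paving matroid of rank $r$ on ground set $E$, $\psi\colon E\to\Gamma$ a labeling to an abelian group with $|\psi(E)|\ge r+1$ (the labels take at least $r+1$ distinct values), and $F\subseteq\Gamma$ with $|F|=r-1$. Suppose $E$ is partitioned into two bases $B$ and $E\setminus B$ with $\psi(B)\notin F$. Then $M$ has an $F$-avoiding basis distinct from $B$; in particular, $B$ is not the unique basis $X$ with $\psi(X)\notin F$. -/

import Mathlib

/-- A matroid `M` is sparse paving of rank `r` if every base has `r` elements and any two
distinct non-base `r`-subsets of the ground set intersect in at most `r - 2` elements. -/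
def IsSparsePaving {α : Type*} (M : Matroid α) (r : ℕ) : Prop :=
  (∀ B, M.IsBase B → B.ncard = r) ∧
  ∀ H₁ H₂ : Set α, H₁ ⊆ M.E → H₂ ⊆ M.E → H₁.ncard = r → H₂.ncard = r →
    ¬ M.IsBase H₁ → ¬ M.IsBase H₂ → H₁ ≠ H₂ → (H₁ ∩ H₂).ncard ≤ r - 2

/-- The case `|ψ(E)| ≥ r + 1` in the proof of Theorem 3.1: if a sparse paving matroid of
rank `r` with at least `r + 1` distinct labels is partitioned into bases `B` and `E \ B`
with `ψ(B) ∉ F` (where `|F| = r - 1`), then there is an `F`-avoiding base other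
than `B`. -/
theorem stmt_17 {α Γ : Type*} [Fintype α] [AddCommGroup Γ] [DecidableEq Γ]
    (M : Matroid α) (hE : M.E = Set.univ) (r : ℕ) (hr : 1 ≤ r)
    (hsp : IsSparsePaving M r)
    (ψ : α → Γ) (hlab : r + 1 ≤ (Finset.univ.image ψ).card)
    (F : Finset Γ) (hF : F.card = r - 1)
    (B : Set α) (hB : M.IsBase B) (hBc : M.IsBase (Set.univ \ B))
    (hBav : (∑ᶠ e ∈ B, ψ e) ∉ F) :
    ∃ X : Set α, M.IsBase X ∧ X ≠ B ∧ (∑ᶠ e ∈ X, ψ e) ∉ F := by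
  classical
  -- basic facts
  have hcardS : ∀ S : Finset α, M.IsBase ↑S → S.card = r := by
    intro S hS
    have := hsp.1 _ hS
    rwa [Set.ncard_coe_finset] at this
  obtain ⟨Bf, hBfc⟩ : ∃ Bf : Finset α, (Bf : Set α) = B :=
    ⟨B.toFinite.toFinset, B.toFinite.coe_toFinset⟩
  have hBfbase : M.IsBase (Bf : Set α) := hBfc ▸ hB
  have hBfcard : Bf.card = r := hcardS _ hBfbase
  have hcompl : (↑(Bfᶜ) : Set α) = Set.univ \ B := by
    rw [Finset.coe_compl, hBfc, Set.compl_eq_univ_diff]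
  have hCbase : M.IsBase (↑(Bfᶜ) : Set α) := by rw [hcompl]; exact hBc
  have hCcard : Bfᶜ.card = r := hcardS _ hCbase
  -- r = 1 case
  rcases eq_or_lt_of_le hr with hr1 | hr2
  · have hFempty : F = ∅ := Finset.card_eq_zero.1 (by omega)
    refine ⟨Set.univ \ B, hBc, ?_, by simp [hFempty]⟩
    intro h
    obtain ⟨x, hx⟩ : B.Nonempty := by
      rw [← hBfc]
      exact_mod_cast Finset.card_pos.1 (by omega : 0 < Bf.card)
    have : x ∈ Set.univ \ B := h.symm ▸ hx
    exact this.2 hx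
  -- main case : r ≥ 2
  by_contra hcon
  push_neg at hcon
  have H : ∀ S : Finset α, M.IsBase ↑S → (S : Set α) ≠ B → (∑ e ∈ S, ψ e) ∈ F := by
    intro S h1 h2
    have := hcon _ h1 h2
    rwa [finsum_mem_coe_finset] at this
  -- sparse paving: at most one non-base r-subset of an (r+1)-set
  have hSP : ∀ U S T : Finset α, U.card = r + 1 → S ⊆ U → T ⊆ U → S.card = r →
      T.card = r → S ≠ T → ¬ M.IsBase ↑S → ¬ M.IsBase ↑T → False := by
    intro U S T hU hSU hTU hS hT hne hnS hnT
    have h1 : (S ∪ T).card ≤ r + 1 := hU ▸ Finset.card_le_card (Finset.union_subset hSU hTU)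
    have h2 : (S ∩ T).card + (S ∪ T).card = S.card + T.card :=
      Finset.card_inter_add_card_union S T
    have h3 : ((S : Set α) ∩ ↑T).ncard ≤ r - 2 := by
      refine hsp.2 _ _ (by rw [hE]; exact Set.subset_univ _) (by rw [hE]; exact Set.subset_univ _)
        (by rw [Set.ncard_coe_finset]; exact hS) (by rw [Set.ncard_coe_finset]; exact hT)
        hnS hnT (fun h => hne (Finset.coe_injective h))
    rw [← Finset.coe_inter, Set.ncard_coe_finset] at h3
    omega
  -- exchange-set basics
  have hexcard : ∀ (S : Finset α) (e y : α), e ∈ S → y ∉ S → S.card = r →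
      (insert y (S.erase e)).card = r := by
    intro S e y he hy hS
    rw [Finset.card_insert_of_notMem (fun h => hy (Finset.mem_of_mem_erase h)),
      Finset.card_erase_of_mem he]
    omega
  have hexsum : ∀ (S : Finset α) (e y : α), e ∈ S → y ∉ S →
      (∑ x ∈ insert y (S.erase e), ψ x) = ψ y + ((∑ x ∈ S, ψ x) - ψ e) := by
    intro S e y he hy
    rw [Finset.sum_insert (fun h => hy (Finset.mem_of_mem_erase h)),
      Finset.sum_erase_eq_sub he]
  -- KEY: from a rainbow base T and a fresh-labeled y, the only escape is that
  -- some exchange equals Bf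
  have KEY : ∀ T : Finset α, M.IsBase ↑T → (T.image ψ).card = r → ∀ y, ψ y ∉ T.image ψ →
      ∃ e ∈ T, insert y (T.erase e) = Bf := by
    intro T hTbase hTimg y hy
    have hTcard : T.card = r := hcardS _ hTbase
    have hyT : y ∉ T := fun h => hy (Finset.mem_image_of_mem ψ h)
    have hTinj : Set.InjOn ψ ↑T := Finset.card_image_iff.1 (by rw [hTimg, hTcard])
    by_cases hall : ∀ e ∈ T, M.IsBase ↑(insert y (T.erase e))
    · -- all exchanges are bases
      by_contra hno
      push_neg at hno
      -- each exchange is a base ≠ B with sum ψ y + (∑ T - ψ e) ∈ F, injectively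
      have hmem : ∀ e ∈ T, (ψ y + ((∑ x ∈ T, ψ x) - ψ e)) ∈ F := by
        intro e he
        have hne : (↑(insert y (T.erase e)) : Set α) ≠ B := by
          rw [← hBfc]
          intro h
          exact hno e he (Finset.coe_injective h)
        have := H _ (hall e he) hne
        rwa [hexsum T e y he hyT] at this
      have hinj : Set.InjOn (fun e => ψ y + ((∑ x ∈ T, ψ x) - ψ e)) ↑T := by
        intro a ha b hb hab
        simp only at hab
        have h1 := add_left_cancel hab
        exact hTinj ha hb (sub_right_injective h1)
      have := Finset.card_le_card_of_injOn _ (fun a ha => hmem a ha) hinj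
      omega
    · -- a unique non-base exchange Z
      push_neg at hall
      obtain ⟨e₀, he₀, hZnb⟩ := hall
      set Z := insert y (T.erase e₀) with hZdef
      have hZcard : Z.card = r := hexcard T e₀ y he₀ hyT hTcard
      have hZinj : Set.InjOn ψ ↑Z := by
        intro a ha b hb hab
        simp only [hZdef, Finset.coe_insert, Set.mem_insert_iff, Finset.mem_coe,
          Finset.mem_erase] at ha hb
        rcases ha with ha | ha <;> rcases hb with hb | hb
        · rw [ha, hb]
        · subst ha
          exact absurd (by rw [hab]; exact Finset.mem_image_of_mem ψ hb.2) hy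
        · subst hb
          exact absurd (by rw [← hab]; exact Finset.mem_image_of_mem ψ ha.2) hy
        · exact hTinj ha.2 hb.2 hab
      -- Z ≠ Bfᶜ
      have hZne : Z ≠ Bfᶜ := by
        intro h
        exact hZnb (h ▸ hCbase)
      -- |α| = 2r
      have htot : Fintype.card α = 2 * r := by
        have := Finset.card_compl Bf
        omega
      -- find g ∉ Z ∪ Bf
      obtain ⟨g, hgZ, hgB⟩ : ∃ g, g ∉ Z ∧ g ∉ Bf := by
        by_contra hg
        push_neg at hg
        have hsub : Zᶜ ⊆ Bf := fun x hx => hg x (Finset.mem_compl.1 hx)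
        have hZc : Zᶜ.card = r := by
          have := Finset.card_compl Z
          omega
        have : Zᶜ = Bf := Finset.eq_of_subset_of_card_le hsub (by omega)
        apply hZne
        rw [← compl_compl Z, this]
      -- all r-subsets of insert g Z other than Z are bases with injective sums in F
      have hWbase : ∀ z ∈ Z, M.IsBase ↑(insert g (Z.erase z)) := by
        intro z hz
        by_contra hW
        refine hSP (insert g Z) Z (insert g (Z.erase z)) ?_ (Finset.subset_insert _ _) ?_
          hZcard (hexcard Z z g hz hgZ hZcard) ?_ hZnb hW
        · rw [Finset.card_insert_of_notMem hgZ]; omega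
        · intro x hx
          rcases Finset.mem_insert.1 hx with h | h
          · exact h ▸ Finset.mem_insert_self _ _
          · exact Finset.mem_insert_of_mem (Finset.mem_of_mem_erase h)
        · intro h
          exact hgZ (h ▸ Finset.mem_insert_self g (Z.erase z))
      have hmem : ∀ z ∈ Z, (ψ g + ((∑ x ∈ Z, ψ x) - ψ z)) ∈ F := by
        intro z hz
        have hne : (↑(insert g (Z.erase z)) : Set α) ≠ B := by
          rw [← hBfc]
          intro h
          exact hgB (Finset.coe_injective h ▸ Finset.mem_insert_self g (Z.erase z))
        have := H _ (hWbase z hz) hne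
        rwa [hexsum Z z g hz hgZ] at this
      have hinj : Set.InjOn (fun z => ψ g + ((∑ x ∈ Z, ψ x) - ψ z)) ↑Z := by
        intro a ha b hb hab
        simp only at hab
        have h1 := add_left_cancel hab
        exact hZinj ha hb (sub_right_injective h1)
      have := Finset.card_le_card_of_injOn _ (fun a ha => hmem a ha) hinj
      omega
  -- get a rainbow base
  have hrb : ∃ T : Finset α, M.IsBase ↑T ∧ (T.image ψ).card = r ∧
      ((Bf.image ψ).card = r → T = Bf) := by
    by_cases hBr : (Bf.image ψ).card = r
    · exact ⟨Bf, hBfbase, hBr, fun _ => rfl⟩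
    · obtain ⟨T, hTmem, hTmax⟩ := Finset.exists_max_image
        (Finset.univ.filter (fun S : Finset α => M.IsBase ↑S)) (fun S => (S.image ψ).card)
        ⟨Bf, Finset.mem_filter.2 ⟨Finset.mem_univ _, hBfbase⟩⟩
      have hTbase : M.IsBase (T : Set α) := (Finset.mem_filter.1 hTmem).2
      have hTcard : T.card = r := hcardS _ hTbase
      refine ⟨T, hTbase, ?_, fun h => absurd h hBr⟩
      by_contra hTimg
      have hle : (T.image ψ).card ≤ r := hTcard ▸ Finset.card_image_le
      have hninj : ¬ Set.InjOn ψ ↑T := fun h =>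
        hTimg (by rw [Finset.card_image_iff.2 h, hTcard])
      rw [Set.InjOn] at hninj
      push_neg at hninj
      obtain ⟨x₁, hx₁, x₂, hx₂, hval, hxne⟩ := hninj
      rw [Finset.mem_coe] at hx₁ hx₂
      -- fresh value
      obtain ⟨y, hyfresh⟩ : ∃ y, ψ y ∉ T.image ψ := by
        by_contra hv
        push_neg at hv
        have : Finset.univ.image ψ ⊆ T.image ψ := by
          intro v hvv
          obtain ⟨y, _, rfl⟩ := Finset.mem_image.1 hvv
          exact hv y
        have := Finset.card_le_card this
        omega
      have hyT : y ∉ T := fun h => hyfresh (Finset.mem_image_of_mem ψ h)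
      -- one of the two exchanges is a base
      have hone : M.IsBase ↑(insert y (T.erase x₁)) ∨ M.IsBase ↑(insert y (T.erase x₂)) := by
        by_contra hb
        push_neg at hb
        refine hSP (insert y T) _ _ ?_ ?_ ?_
          (hexcard T x₁ y hx₁ hyT hTcard) (hexcard T x₂ y hx₂ hyT hTcard) ?_ hb.1 hb.2
        · rw [Finset.card_insert_of_notMem hyT]; omega
        · exact Finset.insert_subset_insert _ (Finset.erase_subset _ _)
        · exact Finset.insert_subset_insert _ (Finset.erase_subset _ _)
        · intro h
          have : x₂ ∈ insert y (T.erase x₁) := Finset.mem_insert_of_mem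
            (Finset.mem_erase.2 ⟨hxne.symm, hx₂⟩)
          rw [h] at this
          rcases Finset.mem_insert.1 this with h' | h'
          · exact hyT (h' ▸ hx₂)
          · exact (Finset.mem_erase.1 h').1 rfl
      -- whichever is a base has a strictly larger image: contradiction with maximality
      have himg : ∀ x ∈ T, ψ x = ψ x₁ →
          ((insert y (T.erase x)).image ψ).card = (T.image ψ).card + 1 := by
        intro x hx hvx
        have herase : (T.erase x).image ψ = T.image ψ := by
          apply Finset.Subset.antisymm
          · exact Finset.image_subset_image (Finset.erase_subset _ _)
          · intro v hvmem
            obtain ⟨t, ht, rfl⟩ := Finset.mem_image.1 hvmem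
            by_cases htx : t = x
            · -- use the other duplicate
              rcases eq_or_ne x x₁ with h1 | h1
              · refine Finset.mem_image.2 ⟨x₂, Finset.mem_erase.2 ⟨?_, hx₂⟩, ?_⟩
                · rw [h1]; exact hxne.symm
                · rw [htx, h1, hval]
              · refine Finset.mem_image.2 ⟨x₁, Finset.mem_erase.2 ⟨?_, hx₁⟩, ?_⟩
                · exact fun h => h1 h.symm
                · rw [htx, hvx]
            · exact Finset.mem_image.2 ⟨t, Finset.mem_erase.2 ⟨htx, ht⟩, rfl⟩
        rw [Finset.image_insert, Finset.card_insert_of_notMem (by rw [herase]; exact hyfresh),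
          herase]
      rcases hone with hbase | hbase
      · have := hTmax _ (Finset.mem_filter.2 ⟨Finset.mem_univ _, hbase⟩)
        rw [himg x₁ hx₁ rfl] at this
        omega
      · have := hTmax _ (Finset.mem_filter.2 ⟨Finset.mem_univ _, hbase⟩)
        rw [himg x₂ hx₂ hval.symm] at this
        omega
  obtain ⟨T, hTbase, hTimg, hTB⟩ := hrb
  -- fresh element for T
  obtain ⟨y, hyfresh⟩ : ∃ y, ψ y ∉ T.image ψ := by
    by_contra hv
    push_neg at hv
    have : Finset.univ.image ψ ⊆ T.image ψ := by
      intro v hvv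
      obtain ⟨z, _, rfl⟩ := Finset.mem_image.1 hvv
      exact hv z
    have := Finset.card_le_card this
    omega
  obtain ⟨e, heT, heq⟩ := KEY T hTbase hTimg y hyfresh
  -- Bf = insert y (T.erase e) is rainbow and contains y
  have hyB : y ∈ Bf := heq ▸ Finset.mem_insert_self _ _
  -- Bf rainbow:
  have hBimg : (Bf.image ψ).card = r := by
    rw [← heq, Finset.image_insert,
      Finset.card_insert_of_notMem
        (fun h => hyfresh (Finset.image_subset_image (Finset.erase_subset _ _) h)),
      Finset.card_image_iff.2 (Set.InjOn.mono (by
        intro a ha; exact Finset.mem_of_mem_erase (Finset.mem_coe.1 ha))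
        (Finset.card_image_iff.1 (by rw [hTimg, hcardS _ hTbase]))),
      Finset.card_erase_of_mem heT, hcardS _ hTbase]
    omega
  -- then T = Bf, so y ∈ T: contradiction
  have := hTB hBimg
  rw [this] at heT
  exact (fun h => hyfresh (Finset.mem_image_of_mem ψ h)) (this ▸ hyB)
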